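/- Let a > b ≥ 1 be integers, U ⊆ ℂⁿ open, f : U → ℂ holomorphic, φ_{a,b}(w) = (w₁^a conj(w₁)^b, …, wₙ^a conj(wₙ)^b), and g = f ∘ φ_{a,b}. Fix w ∈ ℂⁿ \ {0} with φ_{a,b}(w) ∈ U. Define v₁ = g(w)·( conj(g_{w_1}(w)), …, conj(g_{w_n}(w)) ) and v₂ = conj(g(w))·( g_{w̄_1}(w), …, g_{w̄_n}(w) ), and let π : ℂⁿ → ℂⁿ be the hermitian-orthogonal projection onto the orthogonal complement of the complex line ℂ·w. Then ‖π(v₁)‖² − ‖π(v₂)‖² = (a² − b²)·|g(w)|²·( γ − β/‖w‖² ) ≥ 0, where γ = Σ_j |(∂f/∂z_j)(φ_{a,b}(w))|²·|w_j|^{2(a+b−1)} and β = |Σ_j (∂f/∂z_j)(φ_{a,b}(w))·w_j^a·conj(w_j)^b|². Moreover, if g(w) ≠ 0, then equality holds if and only if both (conj(g_{w_1}(w)),…,conj(g_{w_n}(w))) and (g_{w̄_1}(w),…,g_{w̄_n}(w)) are complex scalar multiples of w. -/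

import Mathlib

open Complex ComplexConjugate

/-- The Wirtinger derivative `∂g/∂w_j` of a real-differentiable map
`g : EuclideanSpace ℂ (Fin n) → ℂ`. -/
noncomputable def wdzE {n : ℕ} (g : EuclideanSpace ℂ (Fin n) → ℂ)
    (w : EuclideanSpace ℂ (Fin n)) (j : Fin n) : ℂ :=
  (1 / 2 : ℂ) * (fderiv ℝ g w (EuclideanSpace.single j 1)
    - Complex.I * fderiv ℝ g w (EuclideanSpace.single j Complex.I))

/-- The Wirtinger derivative `∂g/∂w̄_j` of a real-differentiable map
`g : EuclideanSpace ℂ (Fin n) → ℂ`. -/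
noncomputable def wdzbarE {n : ℕ} (g : EuclideanSpace ℂ (Fin n) → ℂ)
    (w : EuclideanSpace ℂ (Fin n)) (j : Fin n) : ℂ :=
  (1 / 2 : ℂ) * (fderiv ℝ g w (EuclideanSpace.single j 1)
    + Complex.I * fderiv ℝ g w (EuclideanSpace.single j Complex.I))

/-- The homogeneous mixed covering `φ_{a,b}(w) = (w₁^a conj(w₁)^b, …, wₙ^a conj(wₙ)^b)`. -/
noncomputable def phiabE {n : ℕ} (a b : ℕ) (w : EuclideanSpace ℂ (Fin n)) :
    EuclideanSpace ℂ (Fin n) :=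
  WithLp.toLp 2 (fun j => w j ^ a * conj (w j) ^ b)

noncomputable def Lab (a b : ℕ) (z : ℂ) : ℂ →L[ℝ] ℂ :=
  ((a : ℂ) * z ^ (a - 1) * conj z ^ b) • (ContinuousLinearMap.id ℝ ℂ)
  + ((b : ℂ) * z ^ a * conj z ^ (b - 1)) • (Complex.conjCLE : ℂ →L[ℝ] ℂ)

lemma Lab_apply (a b : ℕ) (z v : ℂ) :
    Lab a b z v = (a : ℂ) * z ^ (a - 1) * conj z ^ b * v
      + (b : ℂ) * z ^ a * conj z ^ (b - 1) * conj v := by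
  simp [Lab, smul_eq_mul]

lemma hasFDerivAt_zab (a b : ℕ) (z : ℂ) :
    HasFDerivAt (fun z : ℂ => z ^ a * conj z ^ b) (Lab a b z) z := by
  have h1 : HasFDerivAt (fun z : ℂ => z ^ a)
      (((ContinuousLinearMap.smulRight (1 : ℂ →L[ℂ] ℂ) ((a : ℂ) * z ^ (a-1)))).restrictScalars ℝ) z :=
    ((hasDerivAt_pow a z).hasFDerivAt).restrictScalars ℝ
  have hconj : HasFDerivAt (fun z : ℂ => conj z) (Complex.conjCLE : ℂ →L[ℝ] ℂ) z := by
    exact (Complex.conjCLE : ℂ →L[ℝ] ℂ).hasFDerivAt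
  have hpow : HasFDerivAt (fun y : ℂ => y ^ b)
      (((ContinuousLinearMap.smulRight (1 : ℂ →L[ℂ] ℂ) ((b : ℂ) * (conj z) ^ (b-1)))).restrictScalars ℝ)
      (conj z) := ((hasDerivAt_pow b (conj z)).hasFDerivAt).restrictScalars ℝ
  have h2 : HasFDerivAt (fun z : ℂ => conj z ^ b)
      ((((ContinuousLinearMap.smulRight (1 : ℂ →L[ℂ] ℂ) ((b : ℂ) * (conj z) ^ (b-1)))).restrictScalars ℝ).comp
        (Complex.conjCLE : ℂ →L[ℝ] ℂ)) z := hpow.comp z hconj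
  have := h1.mul h2
  refine this.congr_fderiv ?_
  ext v
  simp [Lab, smul_eq_mul]
  ring

noncomputable def Dphi {n : ℕ} (a b : ℕ) (w : EuclideanSpace ℂ (Fin n)) :
    EuclideanSpace ℂ (Fin n) →L[ℝ] EuclideanSpace ℂ (Fin n) :=
  ((PiLp.continuousLinearEquiv 2 ℝ (fun _ : Fin n => ℂ)).symm : (Fin n → ℂ) →L[ℝ] _) ∘L
    (ContinuousLinearMap.pi fun j => (Lab a b (w j)) ∘L ContinuousLinearMap.proj j) ∘L
    ((PiLp.continuousLinearEquiv 2 ℝ (fun _ : Fin n => ℂ)) : _ →L[ℝ] (Fin n → ℂ))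

lemma Dphi_apply {n : ℕ} (a b : ℕ) (w v : EuclideanSpace ℂ (Fin n)) (i : Fin n) :
    Dphi a b w v i = Lab a b (w i) (v i) := rfl

lemma hasFDerivAt_phiabE {n : ℕ} (a b : ℕ) (w : EuclideanSpace ℂ (Fin n)) :
    HasFDerivAt (phiabE a b) (Dphi a b w) w := by
  set E := PiLp.continuousLinearEquiv 2 ℝ (fun _ : Fin n => ℂ)
  have hΦ : HasFDerivAt (fun x : Fin n → ℂ => fun j => x j ^ a * conj (x j) ^ b)
      (ContinuousLinearMap.pi fun j => (Lab a b (w j)) ∘L ContinuousLinearMap.proj j) (E w) := by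
    apply hasFDerivAt_pi''
    intro i
    have happ : HasFDerivAt (fun x : Fin n → ℂ => x i)
        (ContinuousLinearMap.proj (R := ℝ) i) (E w) := hasFDerivAt_apply i (E w)
    have := (hasFDerivAt_zab a b (w i)).comp (E w) happ
    convert this using 1 <;> rfl
  have hE : HasFDerivAt (⇑E) (E : _ →L[ℝ] _) w := E.toContinuousLinearMap.hasFDerivAt
  have hEs : HasFDerivAt (⇑E.symm) (E.symm : _ →L[ℝ] _)
      ((fun x : Fin n → ℂ => fun j => x j ^ a * conj (x j) ^ b) (E w)) :=
    E.symm.toContinuousLinearMap.hasFDerivAt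
  have := hEs.comp w (hΦ.comp w hE)
  exact this

lemma single_eq_smul {n : ℕ} (j : Fin n) (c : ℂ) :
    EuclideanSpace.single j c = c • EuclideanSpace.single j (1 : ℂ) := by
  ext i
  by_cases h : i = j <;> simp [EuclideanSpace.single_apply, h]

lemma Dphi_single {n : ℕ} (a b : ℕ) (w : EuclideanSpace ℂ (Fin n)) (j : Fin n) (c : ℂ) :
    Dphi a b w (EuclideanSpace.single j c)
      = EuclideanSpace.single j (Lab a b (w j) c) := by
  ext i
  rw [Dphi_apply]
  by_cases h : i = j
  · subst h; simp [EuclideanSpace.single_apply]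
  · simp [EuclideanSpace.single_apply, h]

lemma fderiv_g_single {n : ℕ} (a b : ℕ) (f : EuclideanSpace ℂ (Fin n) → ℂ)
    (w : EuclideanSpace ℂ (Fin n)) (hfd : DifferentiableAt ℂ f (phiabE a b w))
    (j : Fin n) (c : ℂ) :
    fderiv ℝ (fun w => f (phiabE a b w)) w (EuclideanSpace.single j c)
      = Lab a b (w j) c * fderiv ℂ f (phiabE a b w) (EuclideanSpace.single j 1) := by
  have hF : HasFDerivAt f ((fderiv ℂ f (phiabE a b w)).restrictScalars ℝ) (phiabE a b w) :=
    (hfd.hasFDerivAt).restrictScalars ℝ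
  have hg : HasFDerivAt (fun w => f (phiabE a b w))
      (((fderiv ℂ f (phiabE a b w)).restrictScalars ℝ).comp (Dphi a b w)) w :=
    hF.comp w (hasFDerivAt_phiabE a b w)
  rw [hg.fderiv]
  simp only [ContinuousLinearMap.comp_apply, Dphi_single, ContinuousLinearMap.coe_restrictScalars']
  rw [single_eq_smul j (Lab a b (w j) c), map_smul, smul_eq_mul]

lemma wdzE_eq {n : ℕ} (a b : ℕ) (f : EuclideanSpace ℂ (Fin n) → ℂ)
    (w : EuclideanSpace ℂ (Fin n)) (hfd : DifferentiableAt ℂ f (phiabE a b w)) (j : Fin n) :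
    wdzE (fun w => f (phiabE a b w)) w j
      = (a : ℂ) * w j ^ (a - 1) * conj (w j) ^ b
          * fderiv ℂ f (phiabE a b w) (EuclideanSpace.single j 1) := by
  rw [wdzE, fderiv_g_single a b f w hfd, fderiv_g_single a b f w hfd, Lab_apply, Lab_apply]
  simp only [map_one, mul_one, Complex.conj_I]
  ring_nf
  simp only [Complex.I_sq]
  ring

lemma wdzbarE_eq {n : ℕ} (a b : ℕ) (f : EuclideanSpace ℂ (Fin n) → ℂ)
    (w : EuclideanSpace ℂ (Fin n)) (hfd : DifferentiableAt ℂ f (phiabE a b w)) (j : Fin n) :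
    wdzbarE (fun w => f (phiabE a b w)) w j
      = (b : ℂ) * w j ^ a * conj (w j) ^ (b - 1)
          * fderiv ℂ f (phiabE a b w) (EuclideanSpace.single j 1) := by
  rw [wdzbarE, fderiv_g_single a b f w hfd, fderiv_g_single a b f w hfd, Lab_apply, Lab_apply]
  simp only [map_one, mul_one, Complex.conj_I]
  ring_nf
  simp only [Complex.I_sq]
  ring

lemma proj_orth_norm_sq {E : Type*} [NormedAddCommGroup E] [InnerProductSpace ℂ E]
    [CompleteSpace E] (w v : E) (hw : w ≠ 0) :
    ‖((ℂ ∙ w)ᗮ.orthogonalProjectionOnto v : E)‖ ^ 2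
      = ‖v‖ ^ 2 - ‖(inner ℂ w v : ℂ)‖ ^ 2 / ‖w‖ ^ 2 := by
  have hwn : (0:ℝ) < ‖w‖ := norm_pos_iff.mpr hw
  have h1 : ((ℂ ∙ w).starProjection v : E)
      = ((inner ℂ w v : ℂ) / ((‖w‖ ^ 2 : ℝ) : ℂ)) • w := Submodule.starProjection_singleton ℂ v
  rw [Submodule.coe_orthogonalProjectionOnto_apply, Submodule.starProjection_orthogonal_val, norm_sub_sq (𝕜 := ℂ), h1, inner_smul_right,
    norm_smul]
  rw [← inner_conj_symm v w]
  set c : ℂ := inner ℂ w v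
  have hcc : c * conj c = ((‖c‖ ^ 2 : ℝ) : ℂ) := by
    rw [Complex.mul_conj]
    norm_cast
    rw [Complex.normSq_eq_norm_sq]
  have h2 : c / ((‖w‖ ^ 2 : ℝ) : ℂ) * conj c = (((‖c‖ ^ 2 / ‖w‖ ^ 2 : ℝ)) : ℂ) := by
    rw [div_mul_eq_mul_div, hcc]
    push_cast
    ring
  have h3 : ‖c / ((‖w‖ ^ 2 : ℝ) : ℂ)‖ = ‖c‖ / ‖w‖ ^ 2 := by
    rw [norm_div]
    congr 1
    simp [_root_.abs_of_nonneg (sq_nonneg ‖w‖)]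
  rw [h2, h3]
  simp only [RCLike.re_to_complex, Complex.ofReal_re]
  field_simp
  ring

lemma eunorm_sq {n : ℕ} (x : EuclideanSpace ℂ (Fin n)) :
    ‖x‖ ^ 2 = ∑ i, ‖x i‖ ^ 2 := by
  rw [EuclideanSpace.norm_eq, Real.sq_sqrt (by positivity)]

lemma euinner_eq {n : ℕ} (x y : EuclideanSpace ℂ (Fin n)) :
    (inner ℂ x y : ℂ) = ∑ i, conj (x i) * y i := by
  simp [PiLp.inner_apply, RCLike.inner_apply, mul_comm]

set_option maxHeartbeats 2000000 in
/-- For the pull-back `g = f ∘ φ_{a,b}` of a holomorphic function `f` (with `a > b ≥ 1`),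
setting `v₁ = g(w)·conj ∇_∂ g(w)`, `v₂ = conj(g(w))·∇_∂̄ g(w)` and `π` the hermitian
orthogonal projection onto `(ℂ·w)ᗮ`, one has
`‖π v₁‖² − ‖π v₂‖² = (a²−b²)|g(w)|²(γ − β/‖w‖²) ≥ 0`; moreover if `g(w) ≠ 0`, equality
holds iff `conj ∇_∂ g(w)` and `∇_∂̄ g(w)` are complex scalar multiples of `w`. -/
theorem norm_sq_projection_difference (n : ℕ) (a b : ℕ) (hb : 1 ≤ b) (hab : b < a)
    (U : Set (EuclideanSpace ℂ (Fin n))) (hU : IsOpen U)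
    (f : EuclideanSpace ℂ (Fin n) → ℂ) (hf : ∀ z ∈ U, DifferentiableAt ℂ f z)
    (w : EuclideanSpace ℂ (Fin n)) (hw0 : w ≠ 0) (hw : phiabE a b w ∈ U)
    (g : EuclideanSpace ℂ (Fin n) → ℂ) (hg : g = fun w => f (phiabE a b w))
    (v₁ v₂ : EuclideanSpace ℂ (Fin n))
    (hv₁ : ∀ j, v₁ j = g w * conj (wdzE g w j))
    (hv₂ : ∀ j, v₂ j = conj (g w) * wdzbarE g w j)
    (γ β : ℝ)
    (hγ : γ = ∑ j, ‖fderiv ℂ f (phiabE a b w) (EuclideanSpace.single j 1)‖ ^ 2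
      * ‖w j‖ ^ (2 * (a + b - 1)))
    (hβ : β = ‖∑ j, fderiv ℂ f (phiabE a b w) (EuclideanSpace.single j 1)
      * w j ^ a * conj (w j) ^ b‖ ^ 2) :
    (‖(ℂ ∙ w)ᗮ.orthogonalProjectionOnto v₁‖ ^ 2 - ‖(ℂ ∙ w)ᗮ.orthogonalProjectionOnto v₂‖ ^ 2
        = ((a : ℝ) ^ 2 - (b : ℝ) ^ 2) * ‖g w‖ ^ 2 * (γ - β / ‖w‖ ^ 2)) ∧
    (0 ≤ ‖(ℂ ∙ w)ᗮ.orthogonalProjectionOnto v₁‖ ^ 2 - ‖(ℂ ∙ w)ᗮ.orthogonalProjectionOnto v₂‖ ^ 2) ∧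
    (g w ≠ 0 →
      (‖(ℂ ∙ w)ᗮ.orthogonalProjectionOnto v₁‖ ^ 2 - ‖(ℂ ∙ w)ᗮ.orthogonalProjectionOnto v₂‖ ^ 2 = 0 ↔
        (∃ lam₁ : ℂ, ∀ j, conj (wdzE g w j) = lam₁ * w j) ∧
        (∃ lam₂ : ℂ, ∀ j, wdzbarE g w j = lam₂ * w j))) := by
  have ha1 : 1 ≤ a := hb.trans hab.le
  have hfd : DifferentiableAt ℂ f (phiabE a b w) := hf _ hw
  set F : Fin n → ℂ := fun j => fderiv ℂ f (phiabE a b w) (EuclideanSpace.single j 1) with hF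
  set u : Fin n → ℂ := fun j => F j * w j ^ (a - 1) * conj (w j) ^ b with hu
  set p : EuclideanSpace ℂ (Fin n) := WithLp.toLp 2 (fun j => conj (u j)) with hp
  have hpj : ∀ j, p j = conj (u j) := fun j => rfl
  -- Wirtinger derivatives
  have hdz : ∀ j, wdzE g w j = (a : ℂ) * u j := by
    intro j
    rw [hg, wdzE_eq a b f w hfd j, hu]
    ring
  have hdzb : ∀ j, wdzbarE g w j = (b : ℂ) * F j * w j ^ a * conj (w j) ^ (b - 1) := by
    intro j
    rw [hg, wdzbarE_eq a b f w hfd j]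
    ring
  -- |u j| ^ 2
  have habsu1 : ∀ j, ‖u j‖
      = ‖F j‖ * ‖w j‖ ^ (a + b - 1) := by
    intro j
    rw [hu]
    simp only [norm_mul, norm_pow, Complex.norm_conj]
    rw [mul_assoc, ← pow_add]
    congr 2
    omega
  have hexp : 2 * (a + b - 1) = (a + b - 1) * 2 := mul_comm _ _
  have habsu : ∀ j, ‖u j‖ ^ 2
      = ‖F j‖ ^ 2 * ‖w j‖ ^ (2 * (a + b - 1)) := by
    intro j
    rw [habsu1 j, mul_pow, ← pow_mul, hexp]
  -- γ = ‖p‖ ^ 2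
  have hγp : γ = ‖p‖ ^ 2 := by
    rw [hγ, eunorm_sq]
    refine Finset.sum_congr rfl fun j _ => ?_
    rw [hpj j, Complex.norm_conj, habsu j]
  -- inner p w = S
  have hipw : (inner ℂ p w : ℂ) = ∑ j, F j * w j ^ a * conj (w j) ^ b := by
    rw [euinner_eq]
    refine Finset.sum_congr rfl fun j _ => ?_
    rw [hpj j, Complex.conj_conj, hu]
    have : w j ^ (a - 1) * w j = w j ^ a := by
      rw [← pow_succ]
      congr 1
      omega
    calc F j * w j ^ (a - 1) * conj (w j) ^ b * w j
        = F j * (w j ^ (a - 1) * w j) * conj (w j) ^ b := by ring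
      _ = F j * w j ^ a * conj (w j) ^ b := by rw [this]
  -- β = |inner p w|^2
  have hβp : β = ‖(inner ℂ p w : ℂ)‖ ^ 2 := by
    rw [hβ, hipw]
  -- ‖v₁‖^2
  have hv1n : ‖v₁‖ ^ 2 = ‖g w‖ ^ 2 * ((a : ℝ) ^ 2 * γ) := by
    rw [eunorm_sq, hγ, Finset.mul_sum, Finset.mul_sum]
    refine Finset.sum_congr rfl fun j _ => ?_
    have h1 : ‖v₁ j‖ = ‖g w‖ * ((a : ℝ) * ‖u j‖) := by
      rw [hv₁ j, hdz j]
      simp [map_mul]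
    rw [h1, habsu1 j, hexp, pow_mul]
    ring
  have hv2n : ‖v₂‖ ^ 2 = ‖g w‖ ^ 2 * ((b : ℝ) ^ 2 * γ) := by
    rw [eunorm_sq, hγ, Finset.mul_sum, Finset.mul_sum]
    refine Finset.sum_congr rfl fun j _ => ?_
    have hpow : ‖w j‖ ^ a * ‖w j‖ ^ (b - 1)
        = ‖w j‖ ^ (a + b - 1) := by
      rw [← pow_add]
      congr 1
      omega
    have h1 : ‖v₂ j‖
        = ‖g w‖ * ((b : ℝ) * ‖F j‖ * ‖w j‖ ^ (a + b - 1)) := by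
      rw [hv₂ j, hdzb j]
      simp only [norm_mul, norm_pow, Complex.norm_conj, Complex.norm_natCast]
      rw [mul_assoc ((b:ℝ) * ‖F j‖), hpow]
    rw [h1, hexp, pow_mul]
    ring
  -- inner products with w
  have hiw1 : (inner ℂ w v₁ : ℂ) = (a : ℂ) * g w * conj (∑ j, F j * w j ^ a * conj (w j) ^ b) := by
    rw [euinner_eq, map_sum, Finset.mul_sum]
    refine Finset.sum_congr rfl fun j _ => ?_
    rw [hv₁ j, hdz j]
    have hwa : conj (w j) ^ (a - 1) * conj (w j) = conj (w j) ^ a := by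
      rw [← pow_succ]
      congr 1
      omega
    simp only [map_mul, map_pow, Complex.conj_conj, Complex.conj_natCast, hu]
    calc conj (w j) * (g w * ((a:ℂ) * (conj (F j) * conj (w j) ^ (a-1) * w j ^ b)))
        = (a:ℂ) * g w * (conj (F j) * (conj (w j) ^ (a-1) * conj (w j)) * w j ^ b) := by ring
      _ = (a:ℂ) * g w * (conj (F j) * conj (w j) ^ a * w j ^ b) := by rw [hwa]
  have hiw2 : (inner ℂ w v₂ : ℂ) = (b : ℂ) * conj (g w) * (∑ j, F j * w j ^ a * conj (w j) ^ b) := by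
    rw [euinner_eq, Finset.mul_sum]
    refine Finset.sum_congr rfl fun j _ => ?_
    rw [hv₂ j, hdzb j]
    have hwb : conj (w j) * conj (w j) ^ (b - 1) = conj (w j) ^ b := by
      rw [← pow_succ']
      congr 1
      omega
    calc conj (w j) * (conj (g w) * ((b:ℂ) * F j * w j ^ a * conj (w j) ^ (b-1)))
        = (b:ℂ) * conj (g w) * (F j * w j ^ a * (conj (w j) * conj (w j) ^ (b-1))) := by ring
      _ = (b:ℂ) * conj (g w) * (F j * w j ^ a * conj (w j) ^ b) := by rw [hwb]
  -- norms of inner products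
  have hS : ‖∑ j, F j * w j ^ a * conj (w j) ^ b‖ ^ 2 = β := by rw [hβ]
  have hiw1n : ‖(inner ℂ w v₁ : ℂ)‖ ^ 2 = (a:ℝ) ^ 2 * ‖g w‖ ^ 2 * β := by
    rw [hiw1]
    simp only [norm_mul, Complex.norm_conj, Complex.norm_natCast]
    rw [mul_pow, mul_pow, hS]
  have hiw2n : ‖(inner ℂ w v₂ : ℂ)‖ ^ 2 = (b:ℝ) ^ 2 * ‖g w‖ ^ 2 * β := by
    rw [hiw2]
    simp only [norm_mul, Complex.norm_conj, Complex.norm_natCast]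
    rw [mul_pow, mul_pow, hS]
  -- the main identity
  have hw2 : (0:ℝ) < ‖w‖ ^ 2 := pow_pos (norm_pos_iff.mpr hw0) 2
  have hmain : ‖(ℂ ∙ w)ᗮ.orthogonalProjectionOnto v₁‖ ^ 2 - ‖(ℂ ∙ w)ᗮ.orthogonalProjectionOnto v₂‖ ^ 2
      = ((a : ℝ) ^ 2 - (b : ℝ) ^ 2) * ‖g w‖ ^ 2 * (γ - β / ‖w‖ ^ 2) := by
    have e1 : ‖(ℂ ∙ w)ᗮ.orthogonalProjectionOnto v₁‖
        = ‖((ℂ ∙ w)ᗮ.orthogonalProjectionOnto v₁ : EuclideanSpace ℂ (Fin n))‖ := rfl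
    have e2 : ‖(ℂ ∙ w)ᗮ.orthogonalProjectionOnto v₂‖
        = ‖((ℂ ∙ w)ᗮ.orthogonalProjectionOnto v₂ : EuclideanSpace ℂ (Fin n))‖ := rfl
    rw [e1, e2, proj_orth_norm_sq w v₁ hw0, proj_orth_norm_sq w v₂ hw0,
      hv1n, hv2n, hiw1n, hiw2n]
    field_simp
  -- Cauchy-Schwarz
  have hCS : β ≤ γ * ‖w‖ ^ 2 := by
    rw [hβp, hγp]
    have := norm_inner_le_norm (𝕜 := ℂ) p w
    calc ‖(inner ℂ p w : ℂ)‖ ^ 2 ≤ (‖p‖ * ‖w‖) ^ 2 := by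
          apply pow_le_pow_left₀ (norm_nonneg _) this
      _ = ‖p‖ ^ 2 * ‖w‖ ^ 2 := by ring
  have hD : 0 ≤ γ - β / ‖w‖ ^ 2 := by
    rw [sub_nonneg, div_le_iff₀ hw2]
    exact hCS
  have hpre : (0:ℝ) < (a : ℝ) ^ 2 - (b : ℝ) ^ 2 := by
    have : (b:ℝ) < (a:ℝ) := by exact_mod_cast hab
    nlinarith [Nat.cast_nonneg (α := ℝ) b]
  refine ⟨hmain, ?_, ?_⟩
  · rw [hmain]
    positivity
  · intro hgw
    have hg2 : (0:ℝ) < ‖g w‖ ^ 2 := by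
      have : ‖g w‖ ≠ 0 := by simpa using hgw
      positivity
    rw [hmain]
    have hgabs : ‖g w‖ ≠ 0 := by simpa using hgw
    constructor
    · -- equality implies scalar multiples
      intro h0
      have hD0 : γ - β / ‖w‖ ^ 2 = 0 := by
        rcases mul_eq_zero.mp h0 with h | h
        · rcases mul_eq_zero.mp h with h' | h'
          · exact absurd h' hpre.ne'
          · exact absurd h' hg2.ne'
        · exact h
      rw [sub_eq_zero] at hD0
      have hβγ : β = γ * ‖w‖ ^ 2 := by
        rw [hD0]
        field_simp
      by_cases hp0 : p = 0
      · have hu0 : ∀ j, u j = 0 := by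
          intro j
          have h5 : p j = 0 := by rw [hp0]; rfl
          rw [hpj j] at h5
          simpa using h5
        refine ⟨⟨0, fun j => ?_⟩, ⟨0, fun j => ?_⟩⟩
        · rw [hdz j, hu0 j]
          simp
        · rw [hdzb j]
          by_cases hwj : w j = 0
          · rw [hwj, zero_pow (by omega : a ≠ 0)]
            ring
          · have hFj : F j = 0 := by
              have h6 := hu0 j
              rw [hu] at h6
              simp only at h6
              rcases mul_eq_zero.mp h6 with h | h
              · rcases mul_eq_zero.mp h with h' | h'
                · exact h'
                · exact absurd (pow_eq_zero_iff (by omega : a - 1 ≠ 0) |>.mp h') hwj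
              · have : conj (w j) = 0 := pow_eq_zero_iff (by omega : b ≠ 0) |>.mp h
                exact absurd (by simpa using this) hwj
            rw [hFj]
            ring
      · -- Cauchy-Schwarz equality
        have heqn : ‖(inner ℂ p w : ℂ)‖ = ‖p‖ * ‖w‖ := by
          have h2 : ‖(inner ℂ p w : ℂ)‖ ^ 2 = (‖p‖ * ‖w‖) ^ 2 := by
            rw [← hβp, hβγ, hγp]
            ring
          nlinarith [norm_nonneg (inner ℂ p w : ℂ), mul_nonneg (norm_nonneg p) (norm_nonneg w)]
        obtain ⟨r, hr0, hwr⟩ := (norm_inner_eq_norm_iff hp0 hw0).1 heqn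
        have hwj : ∀ j, w j = r * p j := by
          intro j
          have h := congrArg (fun x : EuclideanSpace ℂ (Fin n) => x j) hwr
          simpa [PiLp.smul_apply, smul_eq_mul] using h
        have hcu : ∀ j, conj (u j) = r⁻¹ * w j := by
          intro j
          rw [hwj j, ← hpj j]
          field_simp
        refine ⟨⟨(a:ℂ) * r⁻¹, fun j => ?_⟩, ⟨(b:ℂ) * conj r⁻¹, fun j => ?_⟩⟩
        · rw [hdz j, map_mul, Complex.conj_natCast, hcu j]
          ring
        · rw [hdzb j]
          by_cases hwj0 : w j = 0
          · rw [hwj0, zero_pow (by omega : a ≠ 0)]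
            ring
          · have hcwj : conj (w j) ≠ 0 := by simpa using hwj0
            have h1 : u j = conj r⁻¹ * conj (w j) := by
              have h7 := congrArg conj (hcu j)
              simpa using h7
            have h2 : F j * w j ^ (a - 1) * conj (w j) ^ b = conj r⁻¹ * conj (w j) := by
              rw [hu] at h1
              simpa using h1
            have h3 : (F j * w j ^ a * conj (w j) ^ (b - 1)) * conj (w j)
                = (conj r⁻¹ * w j) * conj (w j) := by
              have hb' : conj (w j) ^ b = conj (w j) ^ (b - 1) * conj (w j) := by
                rw [← pow_succ]
                congr 1
                omega
              have ha' : w j ^ (a - 1) * w j = w j ^ a := by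
                rw [← pow_succ]
                congr 1
                omega
              calc (F j * w j ^ a * conj (w j) ^ (b - 1)) * conj (w j)
                  = (F j * (w j ^ (a - 1) * w j) * conj (w j) ^ (b - 1)) * conj (w j) := by
                    rw [ha']
                _ = (F j * w j ^ (a - 1) * conj (w j) ^ b) * w j := by
                    rw [hb']
                    ring
                _ = (conj r⁻¹ * conj (w j)) * w j := by rw [h2]
                _ = (conj r⁻¹ * w j) * conj (w j) := by ring
            have h4 := mul_right_cancel₀ hcwj h3
            linear_combination (b : ℂ) * h4
    · -- scalar multiples imply equality
      rintro ⟨⟨lam₁, hl₁⟩, -⟩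
      have hac : (a : ℂ) ≠ 0 := by
        simp only [ne_eq, Nat.cast_eq_zero]
        omega
      have hpw : p = (lam₁ / (a:ℂ)) • w := by
        refine PiLp.ext fun j => ?_
        show p j = lam₁ / (a:ℂ) * w j
        have h1 : conj ((a:ℂ) * u j) = lam₁ * w j := by
          rw [← hdz j]
          exact hl₁ j
        rw [map_mul, Complex.conj_natCast] at h1
        rw [hpj j]
        field_simp
        linear_combination h1
      have hγ0 : γ = ‖lam₁ / (a:ℂ)‖ ^ 2 * ‖w‖ ^ 2 := by
        rw [hγp, hpw, norm_smul]
        ring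
      have hβ0 : β = ‖lam₁ / (a:ℂ)‖ ^ 2 * ‖w‖ ^ 4 := by
        rw [hβp, hpw, inner_smul_left, inner_self_eq_norm_sq_to_K]
        simp only [norm_mul, norm_pow, RCLike.norm_conj, RCLike.norm_ofReal, Complex.norm_real, norm_norm, Real.norm_eq_abs, abs_norm]
        ring
      have : γ - β / ‖w‖ ^ 2 = 0 := by
        rw [hγ0, hβ0]
        field_simp
        ring
      rw [this, mul_zero]
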